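/- Let V(e) = Σ_{i=1}^n |e_i| be the ℓ1-norm on ℝ^n and let e : [0,∞) → ℝ^n be an absolutely continuous function such that for almost every t ≥ 0 with e(t) ≠ 0, the derivative of t ↦ V(e(t)) satisfies d/dt V(e(t)) ≤ μ for some constant μ < 0. Then e(t) = 0 for every t ≥ -V(e(0))/μ. -/

import Mathlib

/-- finite-time convergence for the ℓ1 Lyapunov function along an
absolutely continuous error trajectory.  Absolute continuity of `t ↦ V(e(t))` is
encoded by the integral (FTC) representation with density `g`. -/
theorem stmt0 (n : ℕ) (e : ℝ → EuclideanSpace ℝ (Fin n)) (μ : ℝ) (hμ : μ < 0)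
    (g : ℝ → ℝ)
    (hint : ∀ t : ℝ, 0 ≤ t →
      (∑ i, |e t i|) = (∑ i, |e 0 i|) + ∫ s in (0:ℝ)..t, g s)
    (hloc : ∀ t : ℝ, 0 ≤ t → IntervalIntegrable g MeasureTheory.volume 0 t)
    (hg : ∀ᵐ s : ℝ, 0 ≤ s → e s ≠ 0 → g s ≤ μ) :
    ∀ t : ℝ, -(∑ i, |e 0 i|) / μ ≤ t → e t = 0 := by
  intro t ht
  set V : ℝ → ℝ := fun s => ∑ i, |e s i| with hVdef
  have hVnn : ∀ s, 0 ≤ V s := fun s => Finset.sum_nonneg fun i _ => abs_nonneg _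
  have hV0 : 0 ≤ -(V 0) / μ := by
    rw [div_nonneg_iff]; right; exact ⟨by linarith [hVnn 0], hμ.le⟩
  have ht0 : 0 ≤ t := le_trans hV0 ht
  -- it suffices to show V t = 0
  have hzero : ∀ s, e s = 0 ↔ V s = 0 := by
    intro s
    constructor
    · intro h
      have h' : ∀ i, e s i = 0 := fun i => by rw [h]; rfl
      simp [hVdef, h']
    · intro h
      have h2 := (Finset.sum_eq_zero_iff_of_nonneg (fun i _ => abs_nonneg (e s i))).mp h
      ext i
      simpa using h2 i (Finset.mem_univ i)
  rw [hzero]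
  by_contra hne
  have hVt : 0 < V t := (hVnn t).lt_of_ne' hne
  -- the zero set of V on [0,t]
  set S : Set ℝ := {s ∈ Set.Icc (0:ℝ) t | V s = 0} with hSdef
  have hint' : ∀ s, 0 ≤ s → V s = V 0 + ∫ u in (0:ℝ)..s, g u := hint
  have key : ∀ a, a ∈ Set.Icc (0:ℝ) t → (∀ s ∈ Set.Ioc a t, V s ≠ 0) →
      V t ≤ V a + μ * (t - a) := by
    intro a ha hpos
    have hIa : IntervalIntegrable g MeasureTheory.volume 0 a := hloc a ha.1
    have hIat : IntervalIntegrable g MeasureTheory.volume a t :=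
      (hloc t ht0).mono_set (by
        rw [Set.uIcc_of_le ha.2, Set.uIcc_of_le ht0]
        exact Set.Icc_subset_Icc ha.1 le_rfl)
    have hsplit : (∫ u in (0:ℝ)..a, g u) + ∫ u in a..t, g u = ∫ u in (0:ℝ)..t, g u :=
      intervalIntegral.integral_add_adjacent_intervals hIa hIat
    have hVt_eq : V t = V a + ∫ u in a..t, g u := by
      rw [hint' t ht0, hint' a ha.1, ← hsplit]; ring
    have hbound : (∫ u in a..t, g u) ≤ ∫ u in a..t, μ := by
      apply intervalIntegral.integral_mono_ae_restrict ha.2 hIat intervalIntegrable_const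
      have hne_a : ∀ᵐ s : ℝ, s ≠ a := by
        rw [MeasureTheory.ae_iff]
        simp
      have h1 : ∀ᵐ s ∂(MeasureTheory.volume.restrict (Set.Icc a t)),
          s ∈ Set.Icc a t := MeasureTheory.ae_restrict_mem measurableSet_Icc
      have h2 := MeasureTheory.ae_restrict_of_ae (μ := MeasureTheory.volume)
        (s := Set.Icc a t) hg
      have h3 := MeasureTheory.ae_restrict_of_ae (μ := MeasureTheory.volume)
        (s := Set.Icc a t) hne_a
      filter_upwards [h1, h2, h3] with s hs hgs hsa
      have hsIoc : s ∈ Set.Ioc a t := ⟨lt_of_le_of_ne hs.1 (Ne.symm hsa), hs.2⟩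
      have hs0 : (0:ℝ) ≤ s := le_trans ha.1 hs.1
      have hes : e s ≠ 0 := fun h => hpos s hsIoc ((hzero s).mp h)
      exact hgs hs0 hes
    rw [intervalIntegral.integral_const, smul_eq_mul] at hbound
    rw [hVt_eq]
    linarith
  by_cases hSne : S.Nonempty
  · -- V is continuous on [0,t] via the primitive
    have hInt : MeasureTheory.IntegrableOn g (Set.Icc 0 t) MeasureTheory.volume := by
      have := hloc t ht0
      rwa [intervalIntegrable_iff_integrableOn_Icc_of_le ht0] at this
    have hF : ContinuousOn (fun x => ∫ u in (0:ℝ)..x, g u) (Set.Icc 0 t) := by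
      have := intervalIntegral.continuousOn_primitive_interval
        (a := 0) (b := t) (μ := MeasureTheory.volume) (f := g)
        (by rwa [Set.uIcc_of_le ht0])
      rwa [Set.uIcc_of_le ht0] at this
    have hVcont : ContinuousOn V (Set.Icc 0 t) := by
      have : ContinuousOn (fun x => V 0 + ∫ u in (0:ℝ)..x, g u) (Set.Icc 0 t) :=
        continuousOn_const.add hF
      exact this.congr fun s hs => hint' s hs.1
    have hSclosed : IsClosed S := by
      have : S = Set.Icc 0 t ∩ V ⁻¹' {0} := by
        ext s; simp [hSdef, Set.mem_setOf_eq]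
      rw [this]
      exact hVcont.preimage_isClosed_of_isClosed isClosed_Icc isClosed_singleton
    have hScompact : IsCompact S :=
      isCompact_Icc.of_isClosed_subset hSclosed fun s hs => hs.1
    set a := sSup S with hadef
    have haS : a ∈ S := hScompact.sSup_mem hSne
    have hbound := key a haS.1 (fun s hs hVs => by
      have : s ∈ S := ⟨⟨le_trans haS.1.1 hs.1.le, hs.2⟩, hVs⟩
      exact absurd (le_csSup hScompact.bddAbove this) (not_le.mpr hs.1))
    have : μ * (t - a) ≤ 0 := mul_nonpos_of_nonpos_of_nonneg hμ.le (by linarith [haS.1.2])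
    have hVa : V a = 0 := haS.2
    linarith
  · -- V never vanishes on [0,t]
    have hbound := key 0 ⟨le_rfl, ht0⟩ (fun s hs hVs =>
      hSne ⟨s, ⟨⟨hs.1.le, hs.2⟩, hVs⟩⟩)
    have htμ : t * μ ≤ -(V 0) := (div_le_iff_of_neg hμ).mp ht
    nlinarith
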